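/- arXiv:0711.3686 — 3 statements merged into one kernel-verified Lean document; each statement's English description precedes it below -/
import Mathlib

section
/- Let (Z_n) be a Galton–Watson process with offspring distribution Q on the non-negative integers. Then for all integers k ≥ 0 and n ≥ 1, Q[Z_1 ≤ k | Z_n = 0] ≥ Q[Z_1 ≤ k], i.e. conditioned on extinction by generation n, the first generation size is stochastically dominated by the unconditioned first generation size. Consequently, E[Z_1 | Z_n = 0] ≤ E[Z_1]. -/
open Finset

/-- Abel summation: `∑' j, j * f j = ∑' k, (tail sum past k)` for nonneg summable `f`. -/
lemma gw_abel (f : ℕ → ℝ) (hf0 : ∀ j, 0 ≤ f j) (hf : Summable f)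
    (hjf : Summable (fun j : ℕ => (j : ℝ) * f j)) :
    Summable (fun k : ℕ => ∑' j : ℕ, f (j + (k + 1))) ∧
    ∑' k : ℕ, ∑' j : ℕ, f (j + (k + 1)) = ∑' j : ℕ, (j : ℝ) * f j := by
  classical
  set F : ℕ × ℕ → ℝ := fun p => if p.1 < p.2 then f p.2 else 0 with hF
  have hF0 : ∀ p, 0 ≤ F p := by
    intro p; simp only [hF]; split
    · exact hf0 _
    · exact le_refl 0
  have hjf0 : ∀ j : ℕ, 0 ≤ (j : ℝ) * f j := fun j =>
    mul_nonneg (Nat.cast_nonneg j) (hf0 j)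
  -- column sums: for fixed j, ∑' k, F (k, j) = j * f j
  have hcolsummable : ∀ j : ℕ, Summable (fun k => F (k, j)) := by
    intro j
    apply summable_of_ne_finset_zero (s := range j)
    intro k hk
    simp only [hF, if_neg (not_lt.mpr (by simpa using hk))]
  have hcol : ∀ j : ℕ, ∑' k : ℕ, F (k, j) = (j : ℝ) * f j := by
    intro j
    rw [tsum_eq_sum (s := range j) (by
      intro k hk
      simp only [hF, if_neg (not_lt.mpr (by simpa using hk))])]
    have he : ∀ k ∈ range j, F (k, j) = f j := by
      intro k hk; simp only [hF, if_pos (mem_range.mp hk)]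
    rw [Finset.sum_congr rfl he, Finset.sum_const, card_range, nsmul_eq_mul]
  -- row bound/values
  have hrowsummable : ∀ k : ℕ, Summable (fun j => F (k, j)) := by
    intro k
    refine Summable.of_nonneg_of_le (fun j => hF0 (k, j)) (fun j => ?_) hf
    simp only [hF]; split
    · exact le_refl _
    · exact hf0 j
  have hrow : ∀ k : ℕ, ∑' j : ℕ, F (k, j) = ∑' j : ℕ, f (j + (k + 1)) := by
    intro k
    have h1 := Summable.sum_add_tsum_nat_add (f := fun j => F (k, j)) (k + 1) (hrowsummable k)
    have h2 : ∑ j ∈ range (k + 1), F (k, j) = 0 := by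
      apply Finset.sum_eq_zero
      intro j hj
      have : ¬ k < j := by have := mem_range.mp hj; omega
      simp only [hF, if_neg this]
    have h3 : ∀ j : ℕ, F (k, j + (k + 1)) = f (j + (k + 1)) := by
      intro j; simp only [hF, if_pos (by omega : k < j + (k + 1))]
    rw [h2, zero_add] at h1
    rw [← h1]
    exact tsum_congr h3
  -- Summability of F on the product
  have hFsum : Summable F := by
    apply summable_of_sum_le (c := ∑' j : ℕ, (j : ℝ) * f j) hF0
    intro s
    obtain ⟨N, hN⟩ : ∃ N : ℕ, ∀ p ∈ s, p.1 < N ∧ p.2 < N := by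
      refine ⟨(s.sup fun p => max p.1 p.2) + 1, fun p hp => ?_⟩
      have h := Finset.le_sup (f := fun p : ℕ × ℕ => max p.1 p.2) hp
      have h1 : p.1 ≤ max p.1 p.2 := le_max_left _ _
      have h2 : p.2 ≤ max p.1 p.2 := le_max_right _ _
      exact ⟨by omega, by omega⟩
    have hsub : s ⊆ range N ×ˢ range N := by
      intro p hp; simp only [mem_product, mem_range]; exact hN p hp
    calc ∑ p ∈ s, F p ≤ ∑ p ∈ range N ×ˢ range N, F p :=
          Finset.sum_le_sum_of_subset_of_nonneg hsub (fun p _ _ => hF0 p)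
      _ = ∑ j ∈ range N, ∑ k ∈ range N, F (k, j) := by
          rw [Finset.sum_product_right]
      _ = ∑ j ∈ range N, (j : ℝ) * f j := by
          refine Finset.sum_congr rfl fun j hj => ?_
          rw [← hcol j]
          exact (tsum_eq_sum (by
            intro k hk
            have h1 := mem_range.mp hj
            have h2 : N ≤ k := by simpa using hk
            have h3 : ¬ k < j := by omega
            simp only [hF, if_neg h3])).symm
      _ ≤ ∑' j : ℕ, (j : ℝ) * f j := Summable.sum_le_tsum _ (fun j _ => hjf0 j) hjf
  -- put it together
  have hprod1 : ∑' p : ℕ × ℕ, F p = ∑' k : ℕ, ∑' j : ℕ, F (k, j) :=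
    Summable.tsum_prod' hFsum (fun k => hrowsummable k)
  have hcomm : ∑' k : ℕ, ∑' j : ℕ, F (k, j) = ∑' j : ℕ, ∑' k : ℕ, F (k, j) := by
    exact (Summable.tsum_comm' (f := fun k j => F (k, j)) hFsum hrowsummable hcolsummable).symm
  have hkey : ∑' k : ℕ, ∑' j : ℕ, f (j + (k + 1)) = ∑' j : ℕ, (j : ℝ) * f j := by
    calc ∑' k : ℕ, ∑' j : ℕ, f (j + (k + 1)) = ∑' k : ℕ, ∑' j : ℕ, F (k, j) :=
          (tsum_congr fun k => (hrow k).symm)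
      _ = ∑' j : ℕ, ∑' k : ℕ, F (k, j) := hcomm
      _ = ∑' j : ℕ, (j : ℝ) * f j := tsum_congr hcol
  have hsummg : Summable (fun k : ℕ => ∑' j : ℕ, f (j + (k + 1))) := by
    have h := (hFsum.hasSum.prod_fiberwise (fun k => (hrowsummable k).hasSum)).summable
    exact h.congr hrow
  exact ⟨hsummg, hkey⟩


/-- The key finite inequality: for `0 ≤ v ≤ 1` and a probability vector `q`,
`P_k * S ≤ A_k` where `A_k, P_k` are partial sums and `S = ∑ q_j v^j`. -/
lemma gw_key (q : ℕ → ℝ) (hq : ∀ j, 0 ≤ q j) (hsq : Summable q) (hsum : ∑' j, q j = 1)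
    (v : ℝ) (hv0 : 0 ≤ v) (hv1 : v ≤ 1) (k : ℕ) :
    (∑ j ∈ range (k + 1), q j) * (∑' j : ℕ, q j * v ^ j)
      ≤ ∑ j ∈ range (k + 1), q j * v ^ j := by
  have hqv : ∀ j : ℕ, 0 ≤ q j * v ^ j := fun j => mul_nonneg (hq j) (pow_nonneg hv0 j)
  have hqvle : ∀ j : ℕ, q j * v ^ j ≤ q j := fun j =>
    mul_le_of_le_one_right (hq j) (pow_le_one₀ hv0 hv1)
  have hsqv : Summable (fun j : ℕ => q j * v ^ j) :=
    Summable.of_nonneg_of_le hqv hqvle hsq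
  set P := ∑ j ∈ range (k + 1), q j with hP
  set A := ∑ j ∈ range (k + 1), q j * v ^ j with hA
  set R := ∑' j : ℕ, q (j + (k + 1)) with hR
  set T := ∑' j : ℕ, q (j + (k + 1)) * v ^ (j + (k + 1)) with hT
  have hsplit1 : P + R = 1 := by
    rw [hP, hR, Summable.sum_add_tsum_nat_add (k + 1) hsq, hsum]
  have hsplit2 : A + T = ∑' j : ℕ, q j * v ^ j := by
    rw [hA, hT]; exact Summable.sum_add_tsum_nat_add (k + 1) hsqv
  rw [← hsplit2]
  have hP0 : 0 ≤ P := Finset.sum_nonneg fun j _ => hq j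
  have hR0 : 0 ≤ R := tsum_nonneg fun j => hq _
  have hvk : 0 ≤ v ^ k := pow_nonneg hv0 k
  have hAge : v ^ k * P ≤ A := by
    rw [hP, hA, Finset.mul_sum]
    refine Finset.sum_le_sum fun j hj => ?_
    have hjk : j ≤ k := by have := mem_range.mp hj; omega
    calc v ^ k * q j = q j * v ^ k := mul_comm _ _
      _ ≤ q j * v ^ j := mul_le_mul_of_nonneg_left
          (pow_le_pow_of_le_one hv0 hv1 hjk) (hq j)
  have hTle : T ≤ v ^ k * R := by
    have h1 : Summable (fun j : ℕ => q (j + (k + 1)) * v ^ (j + (k + 1))) :=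
      (summable_nat_add_iff (f := fun j : ℕ => q j * v ^ j) (k + 1)).mpr hsqv
    have h2 : Summable (fun j : ℕ => q (j + (k + 1))) :=
      (summable_nat_add_iff (f := q) (k + 1)).mpr hsq
    have h3 : ∀ j : ℕ, q (j + (k + 1)) * v ^ (j + (k + 1)) ≤ v ^ k * q (j + (k + 1)) := by
      intro j
      calc q (j + (k + 1)) * v ^ (j + (k + 1))
          ≤ q (j + (k + 1)) * v ^ k := mul_le_mul_of_nonneg_left
            (pow_le_pow_of_le_one hv0 hv1 (by omega)) (hq _)
        _ = v ^ k * q (j + (k + 1)) := mul_comm _ _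
    have h4 := Summable.tsum_le_tsum h3 h1 (h2.mul_left (v ^ k))
    rw [tsum_mul_left] at h4
    exact h4
  have h5 : P * T ≤ P * (v ^ k * R) := mul_le_mul_of_nonneg_left hTle hP0
  have h6 : (v ^ k * P) * R ≤ A * R := mul_le_mul_of_nonneg_right hAge hR0
  calc P * (A + T) = P * A + P * T := by ring
    _ ≤ P * A + P * (v ^ k * R) := by linarith
    _ = P * A + (v ^ k * P) * R := by ring
    _ ≤ P * A + A * R := by linarith
    _ = A * (P + R) := by ring
    _ = A := by rw [hsplit1, mul_one]

/-- For a Galton–Watson process with offspring law `(q_j)` (extinction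
probabilities `u n = Q[Z_n = 0]` satisfying `u 0 = 0`, `u (n+1) = ∑_j q_j (u n)^j`, and
joint law `Q[Z_1 = j, Z_n = 0] = q_j u(n-1)^j`), for all `k ≥ 0` and `n ≥ 1`,
`Q[Z_1 ≤ k | Z_n = 0] ≥ Q[Z_1 ≤ k]`; consequently `E[Z_1 | Z_n = 0] ≤ E[Z_1]`. -/
theorem gw_first_generation_conditioned_on_extinction
    (q : ℕ → ℝ) (hq : ∀ j, 0 ≤ q j) (hsum : ∑' j, q j = 1) (hq0 : 0 < q 0)
    (hmean : Summable (fun j : ℕ => (j : ℝ) * q j))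
    (u : ℕ → ℝ) (hu0 : u 0 = 0)
    (hurec : ∀ n, u (n + 1) = ∑' j, q j * u n ^ j) :
    (∀ k : ℕ, ∀ n : ℕ, 1 ≤ n →
      (∑ j ∈ Finset.range (k + 1), q j * u (n - 1) ^ j) / u n
        ≥ ∑ j ∈ Finset.range (k + 1), q j) ∧
    (∀ n : ℕ, 1 ≤ n →
      (∑' j : ℕ, (j : ℝ) * q j * u (n - 1) ^ j) / u n ≤ ∑' j : ℕ, (j : ℝ) * q j) := by
  have hsq : Summable q := by
    by_contra h
    rw [tsum_eq_zero_of_not_summable h] at hsum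
    norm_num at hsum
  -- 0 ≤ u n ≤ 1
  have hu01 : ∀ n, 0 ≤ u n ∧ u n ≤ 1 := by
    intro n
    induction n with
    | zero => rw [hu0]; exact ⟨le_refl 0, zero_le_one⟩
    | succ m ih =>
      obtain ⟨h0, h1⟩ := ih
      have hqv : ∀ j : ℕ, 0 ≤ q j * u m ^ j := fun j => mul_nonneg (hq j) (pow_nonneg h0 j)
      have hqvle : ∀ j : ℕ, q j * u m ^ j ≤ q j := fun j =>
        mul_le_of_le_one_right (hq j) (pow_le_one₀ h0 h1)
      have hsqv : Summable (fun j : ℕ => q j * u m ^ j) :=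
        Summable.of_nonneg_of_le hqv hqvle hsq
      rw [hurec m]
      constructor
      · exact tsum_nonneg hqv
      · calc ∑' j : ℕ, q j * u m ^ j ≤ ∑' j, q j := Summable.tsum_le_tsum hqvle hsqv hsq
          _ = 1 := hsum
  -- u n > 0 for n ≥ 1
  have hupos : ∀ n : ℕ, 1 ≤ n → 0 < u n := by
    intro n hn
    obtain ⟨m, rfl⟩ : ∃ m, n = m + 1 := ⟨n - 1, by omega⟩
    obtain ⟨h0, h1⟩ := hu01 m
    have hqv : ∀ j : ℕ, 0 ≤ q j * u m ^ j := fun j => mul_nonneg (hq j) (pow_nonneg h0 j)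
    have hsqv : Summable (fun j : ℕ => q j * u m ^ j) :=
      Summable.of_nonneg_of_le hqv
        (fun j => mul_le_of_le_one_right (hq j) (pow_le_one₀ h0 h1)) hsq
    rw [hurec m]
    calc (0 : ℝ) < q 0 := hq0
      _ = q 0 * u m ^ 0 := by ring
      _ ≤ ∑' j : ℕ, q j * u m ^ j := Summable.le_tsum hsqv 0 (fun j _ => hqv j)
  have hun : ∀ n : ℕ, 1 ≤ n → u n = ∑' j : ℕ, q j * u (n - 1) ^ j := by
    intro n hn
    obtain ⟨m, rfl⟩ : ∃ m, n = m + 1 := ⟨n - 1, by omega⟩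
    simp only [Nat.add_sub_cancel]
    exact hurec m
  constructor
  · -- part 1
    intro k n hn
    obtain ⟨hv0, hv1⟩ := hu01 (n - 1)
    have hS := hupos n hn
    rw [ge_iff_le, le_div_iff₀ hS, hun n hn]
    exact gw_key q hq hsq hsum (u (n - 1)) hv0 hv1 k
  · -- part 2
    intro n hn
    obtain ⟨hv0, hv1⟩ := hu01 (n - 1)
    set v := u (n - 1) with hv
    have hS := hupos n hn
    have hqv : ∀ j : ℕ, 0 ≤ q j * v ^ j := fun j => mul_nonneg (hq j) (pow_nonneg hv0 j)
    have hqvle : ∀ j : ℕ, q j * v ^ j ≤ q j := fun j =>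
      mul_le_of_le_one_right (hq j) (pow_le_one₀ hv0 hv1)
    have hsqv : Summable (fun j : ℕ => q j * v ^ j) :=
      Summable.of_nonneg_of_le hqv hqvle hsq
    have hjqv : Summable (fun j : ℕ => (j : ℝ) * (q j * v ^ j)) :=
      Summable.of_nonneg_of_le (fun j => mul_nonneg (Nat.cast_nonneg j) (hqv j))
        (fun j => mul_le_mul_of_nonneg_left (hqvle j) (Nat.cast_nonneg j)) hmean
    obtain ⟨habel1s, habel1⟩ := gw_abel q hq hsq hmean
    obtain ⟨habel2s, habel2⟩ := gw_abel (fun j => q j * v ^ j) hqv hsqv hjqv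
    -- termwise: tail of (q v^·) at k ≤ u n * tail of q at k
    have hterm : ∀ k : ℕ, ∑' j : ℕ, q (j + (k + 1)) * v ^ (j + (k + 1))
        ≤ u n * ∑' j : ℕ, q (j + (k + 1)) := by
      intro k
      have hkey := gw_key q hq hsq hsum v hv0 hv1 k
      have hsplit1 : (∑ j ∈ range (k + 1), q j) + ∑' j : ℕ, q (j + (k + 1)) = 1 := by
        rw [Summable.sum_add_tsum_nat_add (k + 1) hsq, hsum]
      have hsplit2 : (∑ j ∈ range (k + 1), q j * v ^ j)
          + ∑' j : ℕ, q (j + (k + 1)) * v ^ (j + (k + 1)) = u n := by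
        rw [Summable.sum_add_tsum_nat_add (k + 1) hsqv, ← hun n hn]
      have hSeq : u n = ∑' j : ℕ, q j * v ^ j := hun n hn
      rw [← hSeq] at hkey
      have h7 : u n * (∑ j ∈ range (k + 1), q j) + u n * ∑' j : ℕ, q (j + (k + 1)) = u n := by
        rw [← mul_add, hsplit1, mul_one]
      linarith [hkey, h7, hsplit2]
    rw [div_le_iff₀ hS]
    have e1 : (∑' j : ℕ, (j : ℝ) * q j * u (n - 1) ^ j)
        = ∑' j : ℕ, (j : ℝ) * (q j * v ^ j) := by
      exact tsum_congr fun j => by rw [← hv, mul_assoc]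
    rw [e1, ← habel2]
    calc ∑' k : ℕ, ∑' j : ℕ, q (j + (k + 1)) * v ^ (j + (k + 1))
        ≤ ∑' k : ℕ, u n * ∑' j : ℕ, q (j + (k + 1)) := by
          refine Summable.tsum_le_tsum hterm habel2s (Summable.mul_left _ habel1s)
      _ = u n * ∑' k : ℕ, ∑' j : ℕ, q (j + (k + 1)) := tsum_mul_left
      _ = u n * ∑' j : ℕ, (j : ℝ) * q j := by rw [habel1]
      _ = (∑' j : ℕ, (j : ℝ) * q j) * u n := mul_comm _ _
end

section
/- Let (Z_n) be a subcritical Galton–Watson process with offspring law Q, mean m = E_Q[Z_1] < 1, satisfying E_Q[Z_1 log^+ Z_1] < ∞. Then there exists α > 0 such that Q[H ≥ n] ∼ α m^n as n → ∞, where H = max{n ≥ 0 : Z_n > 0}. Moreover, for all n ≥ 0, Q[H ≥ n] ≤ m^n. -/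
open Filter


private lemma gw_bern {b : ℝ} (hb0 : 0 ≤ b) (hb1 : b ≤ 1) (i : ℕ) :
    1 - (1 - b) ^ i ≤ (i : ℝ) * b := by
  have h := one_add_mul_le_pow (a := -b) (by linarith) i
  rw [show (1 : ℝ) + -b = 1 - b by ring] at h
  nlinarith

private lemma gw_term_bound {b : ℝ} (hb0 : 0 ≤ b) (hb1 : b ≤ 1) (j : ℕ) :
    (j : ℝ) * b - (1 - (1 - b) ^ j) ≤ b * min (j : ℝ) ((j : ℝ) ^ 2 * b) := by
  have hx0 : (0:ℝ) ≤ 1 - b := by linarith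
  have hx1 : 1 - b ≤ 1 := by linarith
  rw [min_def]
  split_ifs with h
  · have : (1 - b) ^ j ≤ 1 := pow_le_one₀ hx0 hx1
    nlinarith
  · -- use geometric sum identity
    have hgs : 1 - (1 - b) ^ j = b * ∑ i ∈ Finset.range j, (1 - b) ^ i := by
      have := geom_sum_mul (1 - b) j
      nlinarith [this]
    have hsum : ∑ i ∈ Finset.range j, (1 - (1 - b) ^ i) ≤ (j : ℝ) * ((j : ℝ) * b) := by
      calc ∑ i ∈ Finset.range j, (1 - (1 - b) ^ i)
          ≤ ∑ i ∈ Finset.range j, (j : ℝ) * b := by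
            apply Finset.sum_le_sum
            intro i hi
            have h1 := gw_bern hb0 hb1 i
            have h2 : (i : ℝ) ≤ (j : ℝ) := by
              exact_mod_cast (Finset.mem_range.mp hi).le
            nlinarith
        _ = (j : ℝ) * ((j : ℝ) * b) := by
            rw [Finset.sum_const, Finset.card_range]; push_cast; ring
    have hexp : (j : ℝ) * b - (1 - (1 - b) ^ j)
        = b * ∑ i ∈ Finset.range j, (1 - (1 - b) ^ i) := by
      rw [Finset.sum_sub_distrib, Finset.sum_const, Finset.card_range]
      rw [hgs]; push_cast; ring
    rw [hexp]
    calc b * ∑ i ∈ Finset.range j, (1 - (1 - b) ^ i)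
        ≤ b * ((j : ℝ) * ((j : ℝ) * b)) := by
          exact mul_le_mul_of_nonneg_left hsum hb0
      _ = b * ((j : ℝ) ^ 2 * b) := by ring

private lemma gw_tsum_min_bound {m : ℝ} (hm0 : 0 < m) (hm1 : m < 1) (j : ℕ) :
    ∑' n : ℕ, min (j : ℝ) ((j : ℝ) ^ 2 * m ^ n) ≤
      (-Real.log m)⁻¹ * ((j : ℝ) * Real.log j) + (1 + (1 - m)⁻¹) * j := by
  have hlogm : 0 < -Real.log m := by linarith [Real.log_neg hm0 hm1]
  rcases Nat.eq_zero_or_pos j with hj | hj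
  · subst hj; simp
  have hj1 : (1:ℝ) ≤ (j:ℝ) := by exact_mod_cast hj
  have hjpos : (0:ℝ) < j := by linarith
  have hmin_nonneg : ∀ n : ℕ, 0 ≤ min (j : ℝ) ((j : ℝ) ^ 2 * m ^ n) := by
    intro n; exact le_min (by positivity) (by positivity)
  have hsummable : Summable fun n : ℕ => min (j : ℝ) ((j : ℝ) ^ 2 * m ^ n) := by
    apply Summable.of_nonneg_of_le hmin_nonneg (fun n => min_le_right _ _)
    exact (summable_geometric_of_lt_one hm0.le hm1).mul_left _
  set N := ⌈Real.log j / (-Real.log m)⌉₊ with hN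
  have hNle : (N : ℝ) < Real.log j / (-Real.log m) + 1 :=
    Nat.ceil_lt_add_one (by positivity)
  have hmN : m ^ N ≤ (j : ℝ)⁻¹ := by
    have h1 : Real.log j / (-Real.log m) ≤ (N : ℝ) := Nat.le_ceil _
    have h2 : Real.log j ≤ (N : ℝ) * (-Real.log m) := (div_le_iff₀ hlogm).mp h1
    have h3 : Real.log (m ^ N) ≤ Real.log ((j:ℝ)⁻¹) := by
      rw [Real.log_pow, Real.log_inv]; nlinarith
    exact (Real.log_le_log_iff (pow_pos hm0 N) (by positivity)).mp h3
  have htail : Summable fun i : ℕ => min (j : ℝ) ((j : ℝ) ^ 2 * m ^ (i + N)) :=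
    (summable_nat_add_iff N).mpr hsummable
  have hsplit := hsummable.sum_add_tsum_nat_add N
  have hhead : ∑ n ∈ Finset.range N, min (j : ℝ) ((j : ℝ) ^ 2 * m ^ n) ≤ (N : ℝ) * j := by
    calc ∑ n ∈ Finset.range N, min (j : ℝ) ((j : ℝ) ^ 2 * m ^ n)
        ≤ ∑ n ∈ Finset.range N, (j : ℝ) :=
          Finset.sum_le_sum fun n _ => min_le_left _ _
      _ = (N : ℝ) * j := by rw [Finset.sum_const, Finset.card_range]; push_cast; ring
  have htailb : ∑' i : ℕ, min (j : ℝ) ((j : ℝ) ^ 2 * m ^ (i + N)) ≤ (j : ℝ) * (1 - m)⁻¹ := by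
    have h1 : ∑' i : ℕ, min (j : ℝ) ((j : ℝ) ^ 2 * m ^ (i + N))
        ≤ ∑' i : ℕ, ((j : ℝ) ^ 2 * m ^ N) * m ^ i := by
      apply htail.tsum_le_tsum _ (((summable_geometric_of_lt_one hm0.le hm1).mul_left _))
      intro i
      calc min (j : ℝ) ((j : ℝ) ^ 2 * m ^ (i + N)) ≤ (j : ℝ) ^ 2 * m ^ (i + N) :=
            min_le_right _ _
        _ = ((j : ℝ) ^ 2 * m ^ N) * m ^ i := by rw [pow_add]; ring
    have h2 : ∑' i : ℕ, ((j : ℝ) ^ 2 * m ^ N) * m ^ i = ((j : ℝ) ^ 2 * m ^ N) * (1 - m)⁻¹ := by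
      rw [tsum_mul_left, tsum_geometric_of_lt_one hm0.le hm1]
    have h3 : (j : ℝ) ^ 2 * m ^ N ≤ (j : ℝ) := by
      have : (j : ℝ) ^ 2 * m ^ N ≤ (j : ℝ) ^ 2 * (j:ℝ)⁻¹ :=
        mul_le_mul_of_nonneg_left hmN (by positivity)
      calc (j : ℝ) ^ 2 * m ^ N ≤ (j : ℝ) ^ 2 * (j:ℝ)⁻¹ := this
        _ = (j : ℝ) := by field_simp
    have h4 : (0:ℝ) < (1 - m)⁻¹ := by
      apply inv_pos.mpr; linarith
    nlinarith
  have hlogj : 0 ≤ Real.log j := Real.log_natCast_nonneg j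
  have : ∑' n : ℕ, min (j : ℝ) ((j : ℝ) ^ 2 * m ^ n) ≤ (N : ℝ) * j + (j : ℝ) * (1 - m)⁻¹ := by
    rw [← hsplit]; linarith
  have hNj : (N : ℝ) * j ≤ (Real.log j / (-Real.log m) + 1) * j := by
    apply mul_le_mul_of_nonneg_right hNle.le (by positivity)
  calc ∑' n : ℕ, min (j : ℝ) ((j : ℝ) ^ 2 * m ^ n)
      ≤ (N : ℝ) * j + (j : ℝ) * (1 - m)⁻¹ := this
    _ ≤ (Real.log j / (-Real.log m) + 1) * j + (j : ℝ) * (1 - m)⁻¹ := by linarith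
    _ = (-Real.log m)⁻¹ * ((j : ℝ) * Real.log j) + (1 + (1 - m)⁻¹) * j := by
        rw [div_eq_mul_inv]; ring

/-- For a subcritical Galton–Watson process with offspring law `(q_j)`,
mean `m < 1`, and `E[Z_1 log⁺ Z_1] < ∞` (extinction probabilities `u n = Q[Z_n = 0]`
satisfying the generating-function recursion), there exists `α > 0` with
`Q[H ≥ n] = 1 - u n ∼ α mⁿ`; moreover `1 - u n ≤ mⁿ` for all `n`. -/
theorem gw_height_tail_asymptotics
    (q : ℕ → ℝ) (hq : ∀ j, 0 ≤ q j) (hsum : ∑' j, q j = 1)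
    (hmean : Summable (fun j : ℕ => (j : ℝ) * q j))
    (m : ℝ) (hm : m = ∑' j : ℕ, (j : ℝ) * q j) (hm0 : 0 < m) (hm1 : m < 1)
    (hLlogL : Summable (fun j : ℕ => (j : ℝ) * Real.log j * q j))
    (u : ℕ → ℝ) (hu0 : u 0 = 0)
    (hurec : ∀ n, u (n + 1) = ∑' j, q j * u n ^ j) :
    (∃ α : ℝ, 0 < α ∧
      Tendsto (fun n : ℕ => (1 - u n) / m ^ n) atTop (nhds α)) ∧
    (∀ n : ℕ, 1 - u n ≤ m ^ n) := by
  have hmne : m ≠ 0 := hm0.ne'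
  have hqsum : Summable q := by
    by_contra h
    rw [tsum_eq_zero_of_not_summable h] at hsum
    norm_num at hsum
  obtain ⟨j₀, hj₀1, hj₀q⟩ : ∃ j : ℕ, j ≠ 0 ∧ 0 < q j := by
    by_contra h
    push_neg at h
    have hz : ∀ j : ℕ, (j : ℝ) * q j = 0 := by
      intro j
      rcases Nat.eq_zero_or_pos j with hj | hj
      · simp [hj]
      · have h1 : q j = 0 := le_antisymm (h j (Nat.pos_iff_ne_zero.mp hj)) (hq j)
        simp [h1]
    have : m = 0 := by rw [hm, tsum_congr hz, tsum_zero]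
    linarith
  have hqx : ∀ {s : ℝ}, 0 ≤ s → s ≤ 1 → Summable fun j => q j * s ^ j := by
    intro s hs0 hs1
    refine Summable.of_nonneg_of_le (fun j => mul_nonneg (hq j) (pow_nonneg hs0 j)) (fun j => ?_) hqsum
    exact mul_le_of_le_one_right (hq j) (pow_le_one₀ hs0 hs1)
  have hu : ∀ n, 0 ≤ u n ∧ u n < 1 := by
    intro n
    induction n with
    | zero => constructor <;> simp [hu0]
    | succ n ih =>
      obtain ⟨h0, h1⟩ := ih
      have hs : Summable fun j => q j * u n ^ j := hqx h0 h1.le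
      have hsum2 : Summable fun j => q j * (1 - u n ^ j) :=
        (hqsum.sub hs).congr (fun j => by ring)
      have key : 1 - u (n + 1) = ∑' j, q j * (1 - u n ^ j) := by
        have heq : (∑' j, q j * (1 - u n ^ j)) = (∑' j, q j) - ∑' j, q j * u n ^ j := by
          rw [← hqsum.tsum_sub hs]; exact tsum_congr fun j => by ring
        rw [heq, hsum, hurec]
      have hterm : ∀ j, 0 ≤ q j * (1 - u n ^ j) := fun j =>
        mul_nonneg (hq j) (by linarith [pow_le_one₀ h0 h1.le (n := j)])
      have hpos : 0 < q j₀ * (1 - u n ^ j₀) := by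
        have := pow_lt_one₀ h0 h1 hj₀1
        exact mul_pos hj₀q (by linarith)
      have hlt : 0 < 1 - u (n + 1) := by
        rw [key]
        exact lt_of_lt_of_le hpos (hsum2.le_tsum j₀ fun j _ => hterm j)
      constructor
      · rw [hurec]; exact tsum_nonneg fun j => mul_nonneg (hq j) (pow_nonneg h0 j)
      · linarith
  have hb_pos : ∀ n, 0 < 1 - u n := fun n => by linarith [(hu n).2]
  have hb_le1 : ∀ n, 1 - u n ≤ 1 := fun n => by linarith [(hu n).1]
  have hsu : ∀ n, Summable fun j => q j * u n ^ j := fun n => hqx (hu n).1 (hu n).2.le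
  have hone : ∀ n, 1 - u (n + 1) = ∑' j, q j * (1 - u n ^ j) := by
    intro n
    have heq : (∑' j, q j * (1 - u n ^ j)) = (∑' j, q j) - ∑' j, q j * u n ^ j := by
      rw [← hqsum.tsum_sub (hsu n)]; exact tsum_congr fun j => by ring
    rw [heq, hsum, hurec]
  have hsA : ∀ n, Summable fun j => q j * ((j : ℝ) * (1 - u n)) :=
    fun n => (hmean.mul_right (1 - u n)).congr fun j => by ring
  have hsB : ∀ n, Summable fun j => q j * (1 - u n ^ j) :=
    fun n => (hqsum.sub (hsu n)).congr fun j => by ring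
  have hsL : ∀ n, Summable fun j => q j * ((j : ℝ) * (1 - u n) - (1 - u n ^ j)) :=
    fun n => ((hsA n).sub (hsB n)).congr fun j => by ring
  have hd_eq : ∀ n, m * (1 - u n) - (1 - u (n + 1))
      = ∑' j, q j * ((j : ℝ) * (1 - u n) - (1 - u n ^ j)) := by
    intro n
    have h1 : m * (1 - u n) = ∑' j, q j * ((j : ℝ) * (1 - u n)) := by
      rw [hm, ← tsum_mul_right]
      exact tsum_congr fun j => by ring
    rw [h1, hone n, ← (hsA n).tsum_sub (hsB n)]
    exact tsum_congr fun j => by ring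
  have hterm_nonneg : ∀ n j, 0 ≤ q j * ((j : ℝ) * (1 - u n) - (1 - u n ^ j)) := by
    intro n j
    apply mul_nonneg (hq j)
    have hb := gw_bern (b := 1 - u n) (hb_pos n).le (hb_le1 n) j
    rw [show (1 : ℝ) - (1 - u n) = u n by ring] at hb
    linarith
  have hd_nonneg : ∀ n, 0 ≤ m * (1 - u n) - (1 - u (n + 1)) := fun n => by
    rw [hd_eq n]; exact tsum_nonneg (hterm_nonneg n)
  have hpow : ∀ n, 1 - u n ≤ m ^ n := by
    intro n
    induction n with
    | zero => simp [hu0]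
    | succ n ih =>
      have h1 := hd_nonneg n
      calc 1 - u (n + 1) ≤ m * (1 - u n) := by linarith
        _ ≤ m * m ^ n := by nlinarith
        _ = m ^ (n + 1) := by ring
  have hmin_nonneg : ∀ (j n : ℕ), 0 ≤ q j * min (j : ℝ) ((j : ℝ) ^ 2 * m ^ n) := by
    intro j n
    exact mul_nonneg (hq j) (le_min (by positivity) (by positivity))
  have hTs : ∀ n, Summable fun j => q j * min (j : ℝ) ((j : ℝ) ^ 2 * m ^ n) := by
    intro n
    refine Summable.of_nonneg_of_le (fun j => hmin_nonneg j n) (fun j => ?_) hmean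
    calc q j * min (j : ℝ) ((j : ℝ) ^ 2 * m ^ n)
        ≤ q j * (j : ℝ) := mul_le_mul_of_nonneg_left (min_le_left _ _) (hq j)
      _ = (j : ℝ) * q j := by ring
  set T : ℕ → ℝ := fun n => ∑' j, q j * min (j : ℝ) ((j : ℝ) ^ 2 * m ^ n) with hT
  have hT_nonneg : ∀ n, 0 ≤ T n := fun n => tsum_nonneg (fun j => hmin_nonneg j n)
  have hd_le : ∀ n, m * (1 - u n) - (1 - u (n + 1)) ≤ (1 - u n) * T n := by
    intro n
    rw [hd_eq n, hT]
    have hsR : Summable fun j => (1 - u n) * (q j * min (j : ℝ) ((j : ℝ) ^ 2 * m ^ n)) :=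
      (hTs n).mul_left _
    have hle : ∀ j, q j * ((j : ℝ) * (1 - u n) - (1 - u n ^ j))
        ≤ (1 - u n) * (q j * min (j : ℝ) ((j : ℝ) ^ 2 * m ^ n)) := by
      intro j
      have hb0 : (0 : ℝ) ≤ 1 - u n := (hb_pos n).le
      have htb := gw_term_bound (b := 1 - u n) hb0 (hb_le1 n) j
      rw [show (1 : ℝ) - (1 - u n) = u n by ring] at htb
      have hmono : min (j : ℝ) ((j : ℝ) ^ 2 * (1 - u n)) ≤ min (j : ℝ) ((j : ℝ) ^ 2 * m ^ n) :=
        min_le_min le_rfl (mul_le_mul_of_nonneg_left (hpow n) (sq_nonneg _))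
      calc q j * ((j : ℝ) * (1 - u n) - (1 - u n ^ j))
          ≤ q j * ((1 - u n) * min (j : ℝ) ((j : ℝ) ^ 2 * (1 - u n))) :=
            mul_le_mul_of_nonneg_left htb (hq j)
        _ ≤ q j * ((1 - u n) * min (j : ℝ) ((j : ℝ) ^ 2 * m ^ n)) := by
            apply mul_le_mul_of_nonneg_left _ (hq j)
            exact mul_le_mul_of_nonneg_left hmono hb0
        _ = (1 - u n) * (q j * min (j : ℝ) ((j : ℝ) ^ 2 * m ^ n)) := by ring
    calc ∑' j, q j * ((j : ℝ) * (1 - u n) - (1 - u n ^ j))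
        ≤ ∑' j, (1 - u n) * (q j * min (j : ℝ) ((j : ℝ) ^ 2 * m ^ n)) :=
          (hsL n).tsum_le_tsum hle hsR
      _ = (1 - u n) * ∑' j, q j * min (j : ℝ) ((j : ℝ) ^ 2 * m ^ n) := tsum_mul_left
  have hprod : Summable (fun p : ℕ × ℕ => q p.1 * min (p.1 : ℝ) ((p.1 : ℝ) ^ 2 * m ^ p.2)) := by
    rw [summable_prod_of_nonneg (fun p => hmin_nonneg p.1 p.2)]
    constructor
    · intro j
      refine Summable.of_nonneg_of_le (fun n => hmin_nonneg j n) (fun n => ?_)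
        (((summable_geometric_of_lt_one hm0.le hm1).mul_left ((j : ℝ) ^ 2)).mul_left (q j))
      calc q j * min (j : ℝ) ((j : ℝ) ^ 2 * m ^ n)
          ≤ q j * ((j : ℝ) ^ 2 * m ^ n) := mul_le_mul_of_nonneg_left (min_le_right _ _) (hq j)
        _ = q j * ((j : ℝ) ^ 2 * m ^ n) := rfl
    · have hBsum : Summable fun j : ℕ =>
          q j * ((-Real.log m)⁻¹ * ((j : ℝ) * Real.log j) + (1 + (1 - m)⁻¹) * j) := by
        have h1 : Summable fun j : ℕ => q j * ((-Real.log m)⁻¹ * ((j : ℝ) * Real.log j)) :=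
          (hLlogL.mul_left ((-Real.log m)⁻¹)).congr fun j => by ring
        have h2 : Summable fun j : ℕ => q j * ((1 + (1 - m)⁻¹) * j) :=
          (hmean.mul_left (1 + (1 - m)⁻¹)).congr fun j => by ring
        exact (h1.add h2).congr fun j => by ring
      refine Summable.of_nonneg_of_le (fun j => tsum_nonneg fun n => hmin_nonneg j n)
        (fun j => ?_) hBsum
      show (∑' n : ℕ, q j * min (j : ℝ) ((j : ℝ) ^ 2 * m ^ n)) ≤ _
      rw [tsum_mul_left]
      exact mul_le_mul_of_nonneg_left (gw_tsum_min_bound hm0 hm1 j) (hq j)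
  have hswap : Summable (fun p : ℕ × ℕ => q p.2 * min (p.2 : ℝ) ((p.2 : ℝ) ^ 2 * m ^ p.1)) := by
    have h := ((Equiv.prodComm ℕ ℕ).summable_iff
      (f := fun p : ℕ × ℕ => q p.1 * min (p.1 : ℝ) ((p.1 : ℝ) ^ 2 * m ^ p.2))).mpr hprod
    exact h.congr fun p => rfl
  have hTsum : Summable T := by
    have h := (summable_prod_of_nonneg
      (f := fun p : ℕ × ℕ => q p.2 * min (p.2 : ℝ) ((p.2 : ℝ) ^ 2 * m ^ p.1))
      (fun p => hmin_nonneg p.2 p.1)).mp hswap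
    exact h.2
  obtain ⟨K, hK⟩ : ∃ K : ℕ, ∑' k, T (k + K) < m / 2 :=
    (Filter.Tendsto.eventually_lt_const (half_pos hm0) (tendsto_sum_nat_add T)).exists
  set r : ℕ → ℝ := fun n => (1 - u n) / m ^ n with hr
  have hmpow : ∀ n : ℕ, (0 : ℝ) < m ^ n := fun n => pow_pos hm0 n
  have hr_pos : ∀ n, 0 < r n := fun n => div_pos (hb_pos n) (hmpow n)
  have hstep : ∀ n, r (n + 1) = r n - (m * (1 - u n) - (1 - u (n + 1))) / m ^ (n + 1) := by
    intro n
    simp only [hr]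
    have h1 : (m : ℝ) ^ n ≠ 0 := (hmpow n).ne'
    have h2 : (m : ℝ) ^ (n + 1) ≠ 0 := (hmpow (n + 1)).ne'
    field_simp
    ring
  have hanti : Antitone r := by
    apply antitone_nat_of_succ_le
    intro n
    rw [hstep n]
    have h1 := hd_nonneg n
    have h2 : 0 ≤ (m * (1 - u n) - (1 - u (n + 1))) / m ^ (n + 1) :=
      div_nonneg h1 (hmpow (n + 1)).le
    linarith
  have hbdd : BddBelow (Set.range r) := ⟨0, by rintro x ⟨n, rfl⟩; exact (hr_pos n).le⟩
  have htend : Tendsto r atTop (nhds (⨅ n, r n)) := tendsto_atTop_ciInf hanti hbdd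
  have hrK : ∀ n, K ≤ n → r K - (r K / m) * ∑ k ∈ Finset.Ico K n, T k ≤ r n := by
    intro n hn
    induction n, hn using Nat.le_induction with
    | base => simp
    | succ n hn ih =>
      have hbn : 1 - u n = r n * m ^ n := by
        simp only [hr]; field_simp
      have h3 : r n ≤ r K := hanti hn
      have hdstep : (m * (1 - u n) - (1 - u (n + 1))) / m ^ (n + 1) ≤ (r K / m) * T n := by
        rw [div_le_iff₀ (hmpow (n + 1))]
        calc m * (1 - u n) - (1 - u (n + 1)) ≤ (1 - u n) * T n := hd_le n
          _ = r n * m ^ n * T n := by rw [hbn]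
          _ ≤ r K * m ^ n * T n := by
              apply mul_le_mul_of_nonneg_right _ (hT_nonneg n)
              exact mul_le_mul_of_nonneg_right h3 (hmpow n).le
          _ = (r K / m) * T n * m ^ (n + 1) := by field_simp; ring
      rw [Finset.sum_Ico_succ_top hn, hstep n, mul_add]
      linarith
  have hlow : ∀ n, K ≤ n → r K / 2 ≤ r n := by
    intro n hn
    have h1 := hrK n hn
    have h2 : ∑ k ∈ Finset.Ico K n, T k ≤ m / 2 := by
      rw [Finset.sum_Ico_eq_sum_range]
      have hsumm : Summable fun k => T (k + K) := (summable_nat_add_iff K).mpr hTsum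
      have heq : ∑ k ∈ Finset.range (n - K), T (K + k)
          = ∑ k ∈ Finset.range (n - K), T (k + K) :=
        Finset.sum_congr rfl fun k _ => by rw [add_comm]
      rw [heq]
      calc ∑ k ∈ Finset.range (n - K), T (k + K) ≤ ∑' k, T (k + K) :=
            hsumm.sum_le_tsum _ (fun k _ => hT_nonneg _)
        _ ≤ m / 2 := hK.le
    have h3 : (r K / m) * ∑ k ∈ Finset.Ico K n, T k ≤ (r K / m) * (m / 2) :=
      mul_le_mul_of_nonneg_left h2 (div_nonneg (hr_pos K).le hm0.le)
    have h4 : (r K / m) * (m / 2) = r K / 2 := by field_simp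
    linarith
  refine ⟨⟨⨅ n, r n, ?_, htend⟩, hpow⟩
  have h5 : r K / 2 ≤ ⨅ n, r n :=
    ge_of_tendsto htend (eventually_atTop.mpr ⟨K, hlow⟩)
  have h6 := hr_pos K
  linarith
end

section
/- Let f be the generating function of a supercritical offspring distribution with mean m = f'(1) ∈ (1, ∞), extinction probability q ∈ (0,1) (the fixed point f(q) = q), and let η_n ∈ (0,1) satisfy η_n ∼ α f'(q)^{h_n} with h_n → ∞. Then P[K_0 ≥ h_n] = 1 − (f((1−η_n)q + 1 − q) − f((1−η_n)q)) / (1−q) ∼ C_a f'(q)^{h_n} as n → ∞, where C_a = α q (m − f'(q))/(1−q). -/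
open Filter Asymptotics

/-- Bernoulli-type bound: for `s ∈ [0,1]`, `0 ≤ 1 - (1-s)^k ≤ k*s`. -/
lemma aux_bernoulli {s : ℝ} (h0 : 0 ≤ s) (h1 : s ≤ 1) (k : ℕ) :
    0 ≤ 1 - (1-s)^k ∧ 1 - (1-s)^k ≤ k*s := by
  constructor
  · have : (1-s)^k ≤ 1 := pow_le_one₀ (by linarith) (by linarith)
    linarith
  · have := one_add_mul_le_pow (a := -s) (by linarith) k
    have e : (1 + -s) = 1 - s := by ring
    rw [e] at this
    nlinarith [this]

/-- geometric inequality: `k q^(k-1) (1-q) ≤ 1 - q^k`. -/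
lemma aux_geom {q : ℝ} (h0 : 0 ≤ q) (h1 : q < 1) (k : ℕ) :
    (k:ℝ) * q^(k-1) * (1-q) ≤ 1 - q^k := by
  have hgs : (1 - q) * (∑ i ∈ Finset.range k, q^i) = 1 - q^k := by
    have := geom_sum_mul q k
    nlinarith [this]
  have hsum : (k:ℝ) * q^(k-1) ≤ ∑ i ∈ Finset.range k, q^i := by
    calc (k:ℝ) * q^(k-1) = ∑ _i ∈ Finset.range k, q^(k-1) := by
          rw [Finset.sum_const, Finset.card_range]; ring
      _ ≤ ∑ i ∈ Finset.range k, q^i := by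
          apply Finset.sum_le_sum
          intro i hi
          have hik : i < k := Finset.mem_range.1 hi
          exact pow_le_pow_of_le_one h0 h1.le (by omega : i ≤ k - 1)
  nlinarith [hsum]

/-- strict version for `k ≥ 2`, `0 < q < 1`. -/
lemma aux_geom_strict {q : ℝ} (h0 : 0 < q) (h1 : q < 1) {k : ℕ} (hk : 2 ≤ k) :
    (k:ℝ) * q^(k-1) * (1-q) < 1 - q^k := by
  have hgs : (1 - q) * (∑ i ∈ Finset.range k, q^i) = 1 - q^k := by
    have := geom_sum_mul q k
    nlinarith [this]
  have hsum : (k:ℝ) * q^(k-1) < ∑ i ∈ Finset.range k, q^i := by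
    have hlt : ∑ _i ∈ Finset.range k, q^(k-1) < ∑ i ∈ Finset.range k, q^i := by
      apply Finset.sum_lt_sum
      · intro i hi
        have hik : i < k := Finset.mem_range.1 hi
        exact pow_le_pow_of_le_one h0.le h1.le (by omega : i ≤ k - 1)
      · refine ⟨0, Finset.mem_range.2 (by omega), ?_⟩
        simpa using pow_lt_one₀ h0.le h1 (by omega : k - 1 ≠ 0)
    calc (k:ℝ) * q^(k-1) = ∑ _i ∈ Finset.range k, q^(k-1) := by
          rw [Finset.sum_const, Finset.card_range]; ring
      _ < _ := hlt
  nlinarith [hsum]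

/-- derivative-at-0 limit for each term of the generating-function difference. -/
lemma aux_term_limit (q : ℝ) (k : ℕ) :
    Tendsto (fun t : ℝ => ((1 - (1 - t*q)^k) - q^k * (1 - (1-t)^k)) / t)
      (nhdsWithin 0 (Set.Ioi 0)) (nhds ((k:ℝ)*q - k*q^k)) := by
  have hd1 : HasDerivAt (fun t : ℝ => (1 - t*q)^k)
      ((k:ℝ) * (1 - (0:ℝ)*q)^(k-1) * (0 - 1*q)) 0 :=
    ((hasDerivAt_const 0 (1:ℝ)).sub ((hasDerivAt_id (0:ℝ)).mul_const q)).pow k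
  have hd2 : HasDerivAt (fun t : ℝ => (1 - t)^k)
      ((k:ℝ) * (1 - (0:ℝ))^(k-1) * (0 - 1)) 0 :=
    ((hasDerivAt_const 0 (1:ℝ)).sub (hasDerivAt_id (0:ℝ))).pow k
  have hd : HasDerivAt (fun t : ℝ => (1 - (1 - t*q)^k) - q^k * (1 - (1-t)^k))
      ((k:ℝ)*q - k*q^k) 0 := by
    have := ((hasDerivAt_const 0 (1:ℝ)).sub hd1).sub
      (((hasDerivAt_const 0 (1:ℝ)).sub hd2).const_mul (q^k))
    refine this.congr_deriv ?_
    simp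
    ring
  rw [hasDerivAt_iff_tendsto_slope_zero] at hd
  have hd' := hd.mono_left
    (nhdsWithin_mono 0 (fun x hx => ne_of_gt hx : Set.Ioi (0:ℝ) ⊆ {(0:ℝ)}ᶜ))
  apply hd'.congr'
  filter_upwards [self_mem_nhdsWithin] with t ht
  have ht0 : t ≠ 0 := ne_of_gt ht
  simp only [zero_add, smul_eq_mul]
  rw [div_eq_inv_mul]
  congr 1
  ring

set_option maxHeartbeats 1000000 in
/-- Let `f(s) = ∑ p_k s^k` be a supercritical offspring generating
function with mean `m = f'(1) ∈ (1,∞)` and extinction probability `q ∈ (0,1)`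
(`f(q) = q`). If `η_n ∈ (0,1)` satisfies `η_n ∼ α f'(q)^{h_n}` with `h_n → ∞`, then
`1 - (f((1-η_n)q + 1 - q) - f((1-η_n)q))/(1-q) ∼ C_a f'(q)^{h_n}` where
`C_a = α q (m - f'(q))/(1-q)`. -/
theorem trap_probability_asymptotics
    (p : ℕ → ℝ) (hp : ∀ k, 0 ≤ p k) (hsum : ∑' k, p k = 1)
    (hmeansummable : Summable (fun k : ℕ => (k : ℝ) * p k))
    (m : ℝ) (hm : m = ∑' k : ℕ, (k : ℝ) * p k) (hm1 : 1 < m)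
    (q : ℝ) (hq0 : 0 < q) (hq1 : q < 1)
    (hfix : (∑' k : ℕ, p k * q ^ k) = q)
    (fq' : ℝ) (hfq' : fq' = ∑' k : ℕ, (k : ℝ) * p k * q ^ (k - 1))
    (η : ℕ → ℝ) (hη : ∀ n, 0 < η n ∧ η n < 1)
    (h : ℕ → ℕ) (hh : Tendsto h atTop atTop)
    (α : ℝ) (hα : 0 < α)
    (hequiv : (fun n => η n) ~[atTop] (fun n => α * fq' ^ h n)) :
    (fun n => 1 - ((∑' k : ℕ, p k * ((1 - η n) * q + (1 - q)) ^ k)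
        - (∑' k : ℕ, p k * ((1 - η n) * q) ^ k)) / (1 - q))
      ~[atTop] (fun n => (α * q * (m - fq') / (1 - q)) * fq' ^ h n) := by
  -- basic summability
  have hsump : Summable p := by
    by_contra hc
    rw [tsum_eq_zero_of_not_summable hc] at hsum
    norm_num at hsum
  have hq1' : (0:ℝ) < 1 - q := by linarith
  have hsumx : ∀ x : ℝ, 0 ≤ x → x ≤ 1 → Summable (fun k : ℕ => p k * x ^ k) := by
    intro x hx0 hx1
    refine Summable.of_nonneg_of_le (fun k => mul_nonneg (hp k) (pow_nonneg hx0 k))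
      (fun k => ?_) hsump
    have : x ^ k ≤ 1 := pow_le_one₀ hx0 hx1
    nlinarith [hp k]
  -- existence of k₀ ≥ 2 with p k₀ > 0
  obtain ⟨k₀, hk₀2, hk₀p⟩ : ∃ k, 2 ≤ k ∧ 0 < p k := by
    by_contra hc
    push_neg at hc
    have hz : ∀ k, 2 ≤ k → p k = 0 := fun k hk => le_antisymm (hc k hk) (hp k)
    have hme : (∑' k : ℕ, (k:ℝ) * p k) = ∑ k ∈ ({0,1} : Finset ℕ), (k:ℝ) * p k := by
      apply tsum_eq_sum
      intro b hb
      have : 2 ≤ b := by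
        simp only [Finset.mem_insert, Finset.mem_singleton] at hb
        omega
      rw [hz b this]; ring
    have hmp1 : m = p 1 := by
      rw [hm, hme]; norm_num
    have : p 1 ≤ 1 := by
      rw [← hsum]
      exact hsump.le_tsum 1 (fun j _ => hp j)
    linarith [hmp1 ▸ hm1]
  -- summability with the derivative weights
  have hs1 : Summable (fun k : ℕ => (k:ℝ) * p k * q ^ (k-1)) := by
    refine Summable.of_nonneg_of_le
      (fun k => mul_nonneg (mul_nonneg (Nat.cast_nonneg k) (hp k)) (pow_nonneg hq0.le _))
      (fun k => ?_) hmeansummable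
    have : q ^ (k-1) ≤ 1 := pow_le_one₀ hq0.le hq1.le
    nlinarith [mul_nonneg (Nat.cast_nonneg (α := ℝ) k) (hp k)]
  have hfq'_pos : 0 < fq' := by
    rw [hfq']
    have hterm : 0 < (k₀:ℝ) * p k₀ * q ^ (k₀-1) := by
      have : (0:ℝ) < k₀ := by exact_mod_cast (by omega : 0 < k₀)
      positivity
    calc (0:ℝ) < (k₀:ℝ) * p k₀ * q ^ (k₀-1) := hterm
      _ ≤ _ := hs1.le_tsum k₀ (fun j _ =>
          mul_nonneg (mul_nonneg (Nat.cast_nonneg j) (hp j)) (pow_nonneg hq0.le _))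
  have hfq'_lt_m : fq' < m := by
    rw [hfq', hm]
    apply Summable.tsum_lt_tsum_of_nonneg (i := k₀)
    · intro b
      exact mul_nonneg (mul_nonneg (Nat.cast_nonneg b) (hp b)) (pow_nonneg hq0.le _)
    · intro b
      have : q ^ (b-1) ≤ 1 := pow_le_one₀ hq0.le hq1.le
      nlinarith [mul_nonneg (Nat.cast_nonneg (α := ℝ) b) (hp b)]
    · have hql : q ^ (k₀-1) < 1 := pow_lt_one₀ hq0.le hq1 (by omega)
      have hkpos : (0:ℝ) < (k₀:ℝ) * p k₀ := by
        have : (0:ℝ) < k₀ := by exact_mod_cast (by omega : 0 < k₀)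
        positivity
      nlinarith
    · exact hmeansummable
  have hsq : Summable (fun k : ℕ => p k * q ^ k) := hsumx q hq0.le hq1.le
  -- `f'(q) < 1`
  have hfq'_lt_1 : fq' < 1 := by
    have hu : ∀ k : ℕ, (k:ℝ) * p k * q^(k-1) * (1-q) ≤ p k * (1 - q^k) := by
      intro k
      have := aux_geom hq0.le hq1 k
      nlinarith [hp k, this]
    have hustrict : (k₀:ℝ) * p k₀ * q^(k₀-1) * (1-q) < p k₀ * (1 - q^k₀) := by
      have := aux_geom_strict hq0 hq1 hk₀2
      nlinarith
    have hvsum : Summable (fun k : ℕ => p k * (1 - q^k)) := by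
      refine Summable.of_nonneg_of_le (fun k => ?_) (fun k => ?_) hsump
      · have : q ^ k ≤ 1 := pow_le_one₀ hq0.le hq1.le
        nlinarith [hp k]
      · have h1 : 0 ≤ q ^ k := pow_nonneg hq0.le k
        nlinarith [hp k]
    have hlt : (∑' k : ℕ, (k:ℝ) * p k * q^(k-1) * (1-q)) < ∑' k : ℕ, p k * (1 - q^k) :=
      Summable.tsum_lt_tsum_of_nonneg
        (fun b => mul_nonneg (mul_nonneg (mul_nonneg (Nat.cast_nonneg b) (hp b))
          (pow_nonneg hq0.le _)) hq1'.le)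
        hu hustrict hvsum
    have hv : (∑' k : ℕ, p k * (1 - q^k)) = 1 - q := by
      have : (fun k : ℕ => p k * (1 - q^k)) = fun k => p k - p k * q^k := by
        funext k; ring
      rw [this, hsump.tsum_sub hsq, hsum, hfix]
    have hu' : (∑' k : ℕ, (k:ℝ) * p k * q^(k-1) * (1-q)) = fq' * (1-q) := by
      rw [tsum_mul_right, hfq']
    rw [hv, hu'] at hlt
    have := (mul_lt_mul_iff_left₀ hq1').mp (by linarith : fq' * (1-q) < 1 * (1-q))
    linarith
  -- the key slope limit, via dominated convergence
  have hfq2 : ∀ k : ℕ, (k:ℝ) * q^k = (k:ℝ) * q^(k-1) * q := by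
    intro k
    cases k with
    | zero => simp
    | succ j => simp [pow_succ]; ring
  have hDlim : Tendsto
      (fun t : ℝ => (∑' k : ℕ, p k * ((1 - (1 - t*q)^k) - q^k * (1 - (1-t)^k))) / t)
      (nhdsWithin 0 (Set.Ioi 0)) (nhds (q*m - q*fq')) := by
    have hsum2 : Summable (fun k : ℕ => p k * (2*(k:ℝ))) :=
      (hmeansummable.mul_left 2).congr (fun k => by ring)
    have hlimterm : ∀ k : ℕ, Tendsto
        (fun t : ℝ => (p k * ((1 - (1 - t*q)^k) - q^k * (1 - (1-t)^k))) / t)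
        (nhdsWithin 0 (Set.Ioi 0)) (nhds (p k * ((k:ℝ)*q - k*q^k))) := by
      intro k
      have := (aux_term_limit q k).const_mul (p k)
      apply this.congr
      intro t
      rw [mul_div_assoc]
    have hbound : ∀ᶠ t in nhdsWithin (0:ℝ) (Set.Ioi 0), ∀ k : ℕ,
        ‖(p k * ((1 - (1 - t*q)^k) - q^k * (1 - (1-t)^k))) / t‖ ≤ p k * (2*(k:ℝ)) := by
      filter_upwards [Ioo_mem_nhdsGT_of_mem
        (show (0:ℝ) ∈ Set.Ico 0 1 from ⟨le_refl 0, one_pos⟩)] with t ht k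
      obtain ⟨ht0, ht1⟩ := ht
      have hA := aux_bernoulli (s := t*q) (mul_nonneg ht0.le hq0.le) (by nlinarith) k
      have hB := aux_bernoulli (s := t) ht0.le ht1.le k
      have hqk0 : 0 ≤ q^k := pow_nonneg hq0.le k
      have hqk1 : q^k ≤ 1 := pow_le_one₀ hq0.le hq1.le
      rw [Real.norm_eq_abs, abs_div, abs_of_pos ht0, div_le_iff₀ ht0, abs_mul,
        abs_of_nonneg (hp k)]
      have habs : |(1 - (1 - t*q)^k) - q^k * (1 - (1-t)^k)| ≤ 2*(k:ℝ)*t := by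
        rw [abs_le]
        constructor
        · nlinarith [mul_nonneg hqk0 hB.1, mul_le_of_le_one_left hB.1 hqk1,
            mul_nonneg (mul_nonneg hqk0 hB.1) ht0.le]
        · nlinarith [mul_nonneg hqk0 hB.1, mul_nonneg ht0.le hq0.le]
      calc p k * |(1 - (1 - t*q)^k) - q^k * (1 - (1-t)^k)| ≤ p k * (2*(k:ℝ)*t) :=
            mul_le_mul_of_nonneg_left habs (hp k)
        _ = p k * (2*(k:ℝ)) * t := by ring
    have hmain := tendsto_tsum_of_dominated_convergence hsum2 hlimterm hbound
    have hsumval : (∑' k : ℕ, p k * ((k:ℝ)*q - k*q^k)) = q*m - q*fq' := by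
      have e : (fun k : ℕ => p k * ((k:ℝ)*q - k*q^k))
          = fun k : ℕ => (k:ℝ)*p k*q - ((k:ℝ)*p k*q^(k-1))*q := by
        funext k
        linear_combination (-(p k)) * hfq2 k
      rw [e, Summable.tsum_sub (hmeansummable.mul_right q) (hs1.mul_right q),
        tsum_mul_right, tsum_mul_right, ← hm, ← hfq']
      ring
    rw [hsumval] at hmain
    apply hmain.congr
    intro t
    exact tsum_div_const
  -- rewrite of the LHS
  have hrw : ∀ n, 1 - ((∑' k : ℕ, p k * ((1 - η n) * q + (1 - q)) ^ k)
      - (∑' k : ℕ, p k * ((1 - η n) * q) ^ k)) / (1 - q)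
      = (∑' k : ℕ, p k * ((1 - (1 - η n*q)^k) - q^k * (1 - (1-η n)^k))) / (1 - q) := by
    intro n
    obtain ⟨ht0, ht1⟩ := hη n
    set t := η n with htdef
    have htq : t*q < 1 := by nlinarith
    have hA : Summable (fun k : ℕ => p k * ((1 - t) * q + (1 - q)) ^ k) :=
      hsumx _ (by nlinarith) (by nlinarith)
    have hB : Summable (fun k : ℕ => p k * ((1 - t) * q) ^ k) :=
      hsumx _ (by nlinarith) (by nlinarith)
    have e1 : (∑' k : ℕ, p k * ((1 - (1 - t*q)^k) - q^k * (1 - (1-t)^k)))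
        = (1 - (∑' k : ℕ, p k * ((1 - t) * q + (1 - q)) ^ k))
          - (q - (∑' k : ℕ, p k * ((1 - t) * q) ^ k)) := by
      have e2 : (fun k : ℕ => p k * ((1 - (1 - t*q)^k) - q^k * (1 - (1-t)^k)))
          = fun k : ℕ => (p k - p k * ((1 - t) * q + (1 - q)) ^ k)
            - (p k * q ^ k - p k * ((1 - t) * q) ^ k) := by
        funext k
        rw [show (1 - t) * q + (1 - q) = 1 - t*q from by ring, mul_pow]
        ring
      rw [e2, Summable.tsum_sub (hsump.sub hA) (hsq.sub hB), Summable.tsum_sub hsump hA, Summable.tsum_sub hsq hB,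
        hsum, hfix]
    rw [e1]
    field_simp
    ring
  -- final assembly
  have hL : (0:ℝ) < q*m - q*fq' := by nlinarith
  have hC : (0:ℝ) < α * q * (m - fq') / (1 - q) := by
    apply div_pos _ hq1'
    have : 0 < m - fq' := by linarith
    positivity
  have hpow : ∀ n, (0:ℝ) < fq' ^ h n := fun n => pow_pos hfq'_pos _
  rw [isEquivalent_iff_tendsto_one
    (Eventually.of_forall fun n => ne_of_gt (mul_pos hC (hpow n)))]
  have hto0 : Tendsto (fun n => α * fq' ^ h n) atTop (nhds 0) := by
    have := ((tendsto_pow_atTop_nhds_zero_of_lt_one hfq'_pos.le hfq'_lt_1).comp hh).const_mul α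
    simpa using this
  have hη0 : Tendsto η atTop (nhds 0) := hequiv.symm.tendsto_nhds hto0
  have hηto : Tendsto η atTop (nhdsWithin 0 (Set.Ioi 0)) :=
    tendsto_nhdsWithin_of_tendsto_nhds_of_eventually_within η hη0
      (Eventually.of_forall fun n => (hη n).1)
  have h1 : Tendsto
      (fun n => (∑' k : ℕ, p k * ((1 - (1 - η n*q)^k) - q^k * (1 - (1-η n)^k))) / η n)
      atTop (nhds (q*m - q*fq')) := hDlim.comp hηto
  have h2 : Tendsto (fun n => η n / (α * fq' ^ h n)) atTop (nhds 1) := by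
    have := (isEquivalent_iff_tendsto_one
      (Eventually.of_forall fun n => ne_of_gt (mul_pos hα (hpow n)))).mp hequiv
    simpa [Pi.div_def] using this
  have h3 := (h1.mul h2).mul_const (α / ((1-q) * (α * q * (m - fq') / (1 - q))))
  have hne2 : α * q * (m - fq') ≠ 0 := by
    have : 0 < m - fq' := by linarith
    positivity
  have hval : (q*m - q*fq') * 1 * (α / ((1-q) * (α * q * (m - fq') / (1 - q)))) = 1 := by
    field_simp [hne2]
    exact div_self (sub_ne_zero.mpr hfq'_lt_m.ne')
  rw [hval] at h3
  apply h3.congr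
  intro n
  have hηn := hη n
  rw [Pi.div_apply, hrw n]
  field_simp [hne2, ne_of_gt hηn.1, (hpow n).ne']
end
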